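/- For the finite chain [n] = {1,…,n} with n ≥ 1, let K_p = {α ∈ Reg(OCT_n) : |Im α| = p}. Then |K_1| = n, and for every p with 2 ≤ p ≤ n, |K_p| = (n − p + 1)². -/

import Mathlib

/-- `α` is a (full) contraction of the chain `{1, …, n}` (modelled as `Fin n`):
`|xα - yα| ≤ |x - y|` for all `x, y`. -/
def IsContraction {n : ℕ} (α : Function.End (Fin n)) : Prop :=
  ∀ x y : Fin n, |((α x : ℕ) : ℤ) - ((α y : ℕ) : ℤ)| ≤ |((x : ℕ) : ℤ) - ((y : ℕ) : ℤ)|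

/-- `OCT n`: the order-preserving full contractions of the chain. -/
def OCT (n : ℕ) : Set (Function.End (Fin n)) :=
  {α | IsContraction α ∧ Monotone α}

/-- `ORCT n`: the order-preserving or order-reversing full contractions of the chain. -/
def ORCT (n : ℕ) : Set (Function.End (Fin n)) :=
  {α | IsContraction α ∧ (Monotone α ∨ Antitone α)}

/-- The regular elements of `OCT n`. -/
def RegOCT (n : ℕ) : Set (Function.End (Fin n)) :=
  {α | α ∈ OCT n ∧ ∃ β ∈ OCT n, α * β * α = α}

/-- The regular elements of `ORCT n`. -/
def RegORCT (n : ℕ) : Set (Function.End (Fin n)) :=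
  {α | α ∈ ORCT n ∧ ∃ β ∈ ORCT n, α * β * α = α}

/-- `|Im α|`, the rank of a transformation. -/
noncomputable def imCard {n : ℕ} (α : Function.End (Fin n)) : ℕ :=
  (Set.range α).ncard

lemma abs_cast (a b : ℕ) : |((a:ℤ)) - b| = ((max a b - min a b : ℕ) : ℤ) := by
  rcases le_total a b with h | h
  · rw [abs_of_nonpos (by omega)]; push_cast; omega
  · rw [abs_of_nonneg (by omega)]; push_cast; omega

lemma isContraction_iff {n : ℕ} (α : Function.End (Fin n)) :
    IsContraction α ↔ ∀ x y : Fin n,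
      max (α x : ℕ) (α y : ℕ) - min (α x : ℕ) (α y : ℕ) ≤ max (x:ℕ) y - min (x:ℕ) y := by
  unfold IsContraction
  constructor
  · intro h x y
    have := h x y
    rw [abs_cast, abs_cast] at this
    exact_mod_cast this
  · intro h x y
    rw [abs_cast, abs_cast]
    exact_mod_cast h x y

lemma contr_mono_le {n : ℕ} {α : Function.End (Fin n)} (h : IsContraction α)
    {x y : Fin n} (hxy : (x:ℕ) ≤ y) : (α y : ℕ) ≤ (α x : ℕ) + ((y:ℕ) - (x:ℕ)) := by
  have := (isContraction_iff α).1 h x y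
  omega

/-- The clamp map: `x ↦ j + min (p-1) (x - i)` (truncated so it is always defined). -/
def F (n p i j : ℕ) (hn : 0 < n) : Function.End (Fin n) :=
  fun x => ⟨min (j + min (p-1) ((x:ℕ) - i)) (n-1), by omega⟩

lemma F_apply {n : ℕ} (p i j : ℕ) (hn : 0 < n) (hp : 1 ≤ p) (hj : j + p ≤ n) (x : Fin n) :
    ((F n p i j hn x : ℕ)) = j + min (p-1) ((x:ℕ) - i) := by
  show min (j + min (p-1) ((x:ℕ) - i)) (n-1) = _
  omega

lemma F_mem_OCT {n : ℕ} (p i j : ℕ) (hn : 0 < n) (hp : 1 ≤ p) (hj : j + p ≤ n) :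
    F n p i j hn ∈ OCT n := by
  constructor
  · rw [isContraction_iff]
    intro x y
    rw [F_apply p i j hn hp hj, F_apply p i j hn hp hj]
    omega
  · intro x y hxy
    rw [Fin.le_def] at hxy ⊢
    rw [F_apply p i j hn hp hj, F_apply p i j hn hp hj]
    omega

lemma F_range {n : ℕ} (p i j : ℕ) (hn : 0 < n) (hp : 1 ≤ p) (hi : i + p ≤ n) (hj : j + p ≤ n) :
    Set.range (F n p i j hn) = Set.range (fun k : Fin p => (⟨j + k, by omega⟩ : Fin n)) := by
  ext y
  constructor
  · rintro ⟨x, rfl⟩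
    exact ⟨⟨min (p-1) ((x:ℕ) - i), by omega⟩, Fin.ext (by rw [F_apply p i j hn hp hj])⟩
  · rintro ⟨k, rfl⟩
    refine ⟨⟨i + (k:ℕ), by omega⟩, Fin.ext ?_⟩
    rw [F_apply p i j hn hp hj]
    have : ((⟨i + (k:ℕ), by omega⟩ : Fin n) : ℕ) = i + k := rfl
    rw [this]
    have := k.isLt
    simp only
    omega

lemma F_imCard {n : ℕ} (p i j : ℕ) (hn : 0 < n) (hp : 1 ≤ p) (hi : i + p ≤ n) (hj : j + p ≤ n) :
    imCard (F n p i j hn) = p := by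
  rw [imCard, F_range p i j hn hp hi hj]
  rw [← Nat.card_coe_set_eq, Nat.card_range_of_injective, Nat.card_eq_fintype_card,
    Fintype.card_fin]
  intro a b hab
  have : j + (a:ℕ) = j + b := congrArg Fin.val hab
  exact Fin.ext (by omega)

lemma F_regular {n : ℕ} (p i j : ℕ) (hn : 0 < n) (hp : 1 ≤ p) (hi : i + p ≤ n) (hj : j + p ≤ n) :
    F n p i j hn ∈ RegOCT n := by
  refine ⟨F_mem_OCT p i j hn hp hj, F n p j i hn, F_mem_OCT p j i hn hp hi, ?_⟩
  funext x
  show F n p i j hn (F n p j i hn (F n p i j hn x)) = F n p i j hn x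
  apply Fin.ext
  rw [F_apply p i j hn hp hj, F_apply p j i hn hp hi, F_apply p i j hn hp hj]
  omega

/-- Every regular element of `OCT n` has clamp form. -/
lemma regular_form {n : ℕ} (hn : 0 < n) {α : Function.End (Fin n)} (hα : α ∈ RegOCT n) :
    ∃ d i j, i + (d+1) ≤ n ∧ j + (d+1) ≤ n ∧ α = F n (d+1) i j hn := by
  obtain ⟨⟨hc, hm⟩, β, ⟨hcβ, hmβ⟩, hreg⟩ := hα
  have hfix : ∀ x, α (β (α x)) = α x := fun x => congrFun hreg x
  set z : Fin n := ⟨0, hn⟩ with hz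
  set w : Fin n := ⟨n-1, by omega⟩ with hw
  have hzv : (z:ℕ) = 0 := rfl
  have hwv : (w:ℕ) = n-1 := rfl
  set a := α z with ha
  set b := α w with hb
  have hab : (a:ℕ) ≤ b := hm (by rw [Fin.le_def]; omega)
  set d := (b:ℕ) - a with hd
  have hfa : α (β a) = a := hfix z
  have hfb : α (β b) = b := hfix w
  have hba : (β a : ℕ) ≤ β b := hmβ (by rw [Fin.le_def]; exact hab)
  set i := (β a : ℕ) with hi
  have h1 : (β b : ℕ) ≤ i + d := by
    have := contr_mono_le hcβ (x := a) (y := b) hab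
    omega
  have h2 : i + d ≤ (β b : ℕ) := by
    have := contr_mono_le hc (x := β a) (y := β b) hba
    rw [hfa, hfb] at this
    omega
  have hβb : (β b : ℕ) = i + d := le_antisymm h1 h2
  have hdn : i + d ≤ n - 1 := by have := (β b).isLt; omega
  have hbad : (b:ℕ) = a + d := by omega
  have hjn : (a:ℕ) + d ≤ n - 1 := by have := b.isLt; omega
  have hikn : ∀ k, k ≤ d → i + k < n := by intro k hk; omega
  have hstep : ∀ k, (hk : k ≤ d) → (α ⟨i + k, hikn k hk⟩ : ℕ) = a + k := by
    intro k hk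
    set u : Fin n := ⟨i + k, hikn k hk⟩ with hu
    have huv : (u:ℕ) = i + k := rfl
    have hle : (α u : ℕ) ≤ (a:ℕ) + k := by
      have := contr_mono_le hc (x := β a) (y := u) (by omega)
      rw [hfa] at this
      omega
    have hge : (a:ℕ) + k ≤ α u := by
      have := contr_mono_le hc (x := u) (y := β b) (by omega)
      rw [hfb] at this
      omega
    omega
  refine ⟨d, i, a, by omega, by omega, ?_⟩
  funext x
  apply Fin.ext
  rw [F_apply (d+1) i a hn (by omega) (by omega)]
  simp only [Nat.add_sub_cancel]
  rcases le_or_gt (x:ℕ) i with hx | hx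
  · have h3 : (α x : ℕ) ≤ a := by
      have h5 : α x ≤ α (β a) := hm (by rw [Fin.le_def]; omega)
      rw [hfa] at h5
      exact h5
    have h4 : (a:ℕ) ≤ α x := hm (a := z) (b := x) (by rw [Fin.le_def]; omega)
    omega
  · rcases le_or_gt ((x:ℕ) - i) d with hxd | hxd
    · have hx2 : x = ⟨i + ((x:ℕ) - i), hikn _ hxd⟩ := by
        apply Fin.ext
        show (x:ℕ) = i + ((x:ℕ) - i)
        omega
      rw [hx2, hstep _ hxd]
      have : ((⟨i + ((x:ℕ) - i), hikn _ hxd⟩ : Fin n) : ℕ) = i + ((x:ℕ) - i) := rfl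
      rw [this]
      omega
    · have h3 : (α x : ℕ) ≤ b := hm (a := x) (b := w) (by rw [Fin.le_def]; omega)
      have h4 : (b:ℕ) ≤ α x := by
        have h5 : α (β b) ≤ α x := hm (by rw [Fin.le_def]; omega)
        rw [hfb] at h5
        exact h5
      omega

lemma F_inj {n p : ℕ} (hn : 0 < n) (hp : 2 ≤ p) (hpn : p ≤ n) :
    Function.Injective (fun ij : Fin (n-p+1) × Fin (n-p+1) => F n p ij.1 ij.2 hn) := by
  have key : ∀ i i' j : ℕ, i + p ≤ n → i' + p ≤ n → j + p ≤ n → i < i' →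
      F n p i j hn ≠ F n p i' j hn := by
    intro i i' j hi hi' hj hii h
    set t : Fin n := ⟨i+1, by omega⟩ with ht
    have htv : (t:ℕ) = i + 1 := rfl
    have := congrArg (fun f : Function.End (Fin n) => ((f t : Fin n) : ℕ)) h
    rw [F_apply p i j hn (by omega) hj, F_apply p i' j hn (by omega) hj, htv] at this
    omega
  rintro ⟨i, j⟩ ⟨i', j'⟩ h
  simp only at h
  have hi : (i:ℕ) + p ≤ n := by have := i.isLt; omega
  have hi' : (i':ℕ) + p ≤ n := by have := i'.isLt; omega
  have hj : (j:ℕ) + p ≤ n := by have := j.isLt; omega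
  have hj' : (j':ℕ) + p ≤ n := by have := j'.isLt; omega
  have hjj : (j:ℕ) = j' := by
    have := congrArg (fun f : Function.End (Fin n) => ((f ⟨0, hn⟩ : Fin n) : ℕ)) h
    rw [F_apply (p:=p) (i:=(i:ℕ)) (j:=(j:ℕ)) hn (by omega) hj,
      F_apply (p:=p) (i:=(i':ℕ)) (j:=(j':ℕ)) hn (by omega) hj'] at this
    have h0 : ((⟨0, hn⟩ : Fin n) : ℕ) = 0 := rfl
    rw [h0] at this
    omega
  rw [← hjj] at h
  have hii : (i:ℕ) = i' := by
    rcases lt_trichotomy (i:ℕ) (i':ℕ) with hlt | heq | hgt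
    · exact absurd h (key _ _ _ hi hi' hj hlt)
    · exact heq
    · exact absurd h.symm (key _ _ _ hi' hi hj hgt)
  exact Prod.ext (Fin.ext hii) (Fin.ext hjj)

lemma Kp_eq {n p : ℕ} (hn : 0 < n) (hp : 2 ≤ p) (hpn : p ≤ n) :
    {α : Function.End (Fin n) | α ∈ RegOCT n ∧ imCard α = p} =
      Set.range (fun ij : Fin (n-p+1) × Fin (n-p+1) => F n p ij.1 ij.2 hn) := by
  ext α
  constructor
  · rintro ⟨hreg, hcard⟩
    obtain ⟨d, i, j, hi, hj, rfl⟩ := regular_form hn hreg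
    have hd : d + 1 = p := by
      rw [F_imCard (d+1) i j hn (by omega) hi hj] at hcard
      exact hcard
    subst hd
    exact ⟨⟨⟨i, by omega⟩, ⟨j, by omega⟩⟩, rfl⟩
  · rintro ⟨⟨i, j⟩, rfl⟩
    have hi : (i:ℕ) + p ≤ n := by have := i.isLt; omega
    have hj : (j:ℕ) + p ≤ n := by have := j.isLt; omega
    exact ⟨F_regular p i j hn (by omega) hi hj, F_imCard p i j hn (by omega) hi hj⟩

lemma K1_eq {n : ℕ} (hn : 0 < n) :
    {α : Function.End (Fin n) | α ∈ RegOCT n ∧ imCard α = 1} =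
      Set.range (α := Function.End (Fin n)) (fun c : Fin n => ((fun _ => c) : Function.End (Fin n))) := by
  haveI : Nonempty (Fin n) := ⟨⟨0, hn⟩⟩
  ext α
  constructor
  · rintro ⟨hreg, hcard⟩
    obtain ⟨c, hc⟩ := Set.ncard_eq_one.mp hcard
    refine ⟨c, ?_⟩
    funext x
    have hx : α x ∈ Set.range α := ⟨x, rfl⟩
    rw [hc] at hx
    exact hx.symm
  · rintro ⟨c, rfl⟩
    refine ⟨⟨⟨?_, monotone_const⟩, (fun _ => c), ⟨?_, monotone_const⟩, rfl⟩, ?_⟩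
    · intro x y
      simp
    · intro x y
      simp
    · show (Set.range _).ncard = 1
      rw [Set.range_const, Set.ncard_singleton]


/-- for `K_p = {α ∈ Reg(OCT_n) : |Im α| = p}` one has `|K_1| = n` and
`|K_p| = (n - p + 1)²` for `2 ≤ p ≤ n`. -/
theorem stmt_0 (n : ℕ) (hn : 1 ≤ n) :
    ({α : Function.End (Fin n) | α ∈ RegOCT n ∧ imCard α = 1}).ncard = n ∧
    ∀ p : ℕ, 2 ≤ p → p ≤ n →
      ({α : Function.End (Fin n) | α ∈ RegOCT n ∧ imCard α = p}).ncard = (n - p + 1) ^ 2 := by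
  constructor
  · rw [K1_eq hn, ← Nat.card_coe_set_eq]
    refine (Nat.card_range_of_injective
      (f := fun c : Fin n => ((fun _ => c) : Function.End (Fin n))) ?_).trans
      (by rw [Nat.card_eq_fintype_card, Fintype.card_fin])
    intro a b hab
    exact congrFun hab ⟨0, hn⟩
  · intro p hp hpn
    rw [Kp_eq hn hp hpn, ← Nat.card_coe_set_eq, Nat.card_range_of_injective (F_inj hn hp hpn),
      Nat.card_eq_fintype_card, Fintype.card_prod, Fintype.card_fin, sq]
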